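/- Abstract form of Theorem 3 (quantization of the volume form bracket): fix n ≥ 1. Suppose for smooth functions f on a compact manifold M we have operators T_f^{(k)} on finite-dimensional Hilbert spaces with f ↦ T_f^{(k)} linear, satisfying (i) ‖ik[T_f^{(k)},T_g^{(k)}] − T_{{f,g}}^{(k)}‖ = O(1/k), (ii) ‖T_f^{(k)}‖ ≤ |f|_∞, (iii) ‖T_{f₁}^{(k)}⋯T_{f_p}^{(k)} − T_{f₁⋯f_p}^{(k)}‖ = O(1/k), where {·,·} is an antisymmetric biderivation. Define the order-2n bracket {f₁,...,f_{2n}} := (1/(2ⁿ n!)) Σ_{σ∈S_{2n}} sign(σ) ∏_{j=1}^n {f_{σ(2j−1)}, f_{σ(2j)}}. Then ‖((ik)ⁿ/n!)[T_{f₁}^{(k)},...,T_{f_{2n}}^{(k)}] − T_{{f₁,...,f_{2n}}}^{(k)}‖ = O(1/k) as k→∞. -/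

import Mathlib

set_option maxHeartbeats 2000000

open Filter Asymptotics

/-- The Nambu generalized commutator. -/
noncomputable def nambu {R : Type*} [Ring R] {n : ℕ} (A : Fin n → R) : R :=
  ∑ σ : Equiv.Perm (Fin n), (Equiv.Perm.sign σ : ℤ) • (List.ofFn fun i => A (σ i)).prod

lemma pair_fst_lt {n : ℕ} (j : Fin n) : 2 * j.1 < 2 * n := by have := j.2; omega

lemma pair_snd_lt {n : ℕ} (j : Fin n) : 2 * j.1 + 1 < 2 * n := by have := j.2; omega

lemma list_prod_sub {R : Type*} [Ring R] :
    ∀ (l : List R) (m : ℕ) (hm : m < l.length) (x y : R),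
      l.get ⟨m, hm⟩ = x - y → l.prod = (l.set m x).prod - (l.set m y).prod := by
  intro l
  induction l with
  | nil => intro m hm; simp at hm
  | cons a t ih =>
    intro m hm x y h
    cases m with
    | zero =>
      simp only [List.get] at h
      simp [h, sub_mul]
    | succ m =>
      simp only [List.get] at h
      have := ih m (by simpa using hm) x y h
      simp [this, mul_sub]

lemma pair_prod {R : Type*} [Ring R] :
    ∀ (n : ℕ) (B : Fin (2 * n) → R),
      (List.ofFn B).prod =
        (List.ofFn fun j : Fin n =>
          B ⟨2 * j.1, pair_fst_lt j⟩ * B ⟨2 * j.1 + 1, pair_snd_lt j⟩).prod := by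
  intro n
  induction n with
  | zero => intro B; simp
  | succ n ih =>
    intro B
    have h1 : (List.ofFn B) = B ⟨0, by omega⟩ :: B ⟨1, by omega⟩ ::
        List.ofFn (fun i : Fin (2 * n) => B ⟨i.1 + 2, by have := i.2; omega⟩) := by
      rw [List.ofFn_succ, List.ofFn_succ]
      rfl
    have h2 : (List.ofFn fun j : Fin (n + 1) =>
          B ⟨2 * j.1, by have := j.2; omega⟩ * B ⟨2 * j.1 + 1, by have := j.2; omega⟩)
        = (B ⟨0, by omega⟩ * B ⟨1, by omega⟩) ::
          (List.ofFn fun j : Fin n =>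
            B ⟨2 * j.1 + 2, by have := j.2; omega⟩ * B ⟨2 * j.1 + 3, by have := j.2; omega⟩) := by
      rw [List.ofFn_succ]
      congr 1
    rw [h1, h2]
    simp only [List.prod_cons]
    rw [ih (fun i : Fin (2 * n) => B ⟨i.1 + 2, by have := i.2; omega⟩)]
    rw [mul_assoc]

/-- the list of pair-products, the first `m` of them replaced by commutators -/
noncomputable def pList {R : Type*} [Ring R] (n m : ℕ) (A : Fin (2 * n) → R)
    (σ : Equiv.Perm (Fin (2 * n))) : List R :=
  List.ofFn fun j : Fin n =>
    if j.1 < m then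
      A (σ ⟨2 * j.1, pair_fst_lt j⟩) * A (σ ⟨2 * j.1 + 1, pair_snd_lt j⟩)
        - A (σ ⟨2 * j.1 + 1, pair_snd_lt j⟩) * A (σ ⟨2 * j.1, pair_fst_lt j⟩)
    else A (σ ⟨2 * j.1, pair_fst_lt j⟩) * A (σ ⟨2 * j.1 + 1, pair_snd_lt j⟩)

noncomputable def Ee {R : Type*} [Ring R] (n : ℕ) (A : Fin (2 * n) → R) (m : ℕ) : R :=
  ∑ σ : Equiv.Perm (Fin (2 * n)), (Equiv.Perm.sign σ : ℤ) • (pList n m A σ).prod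

lemma pList_length {R : Type*} [Ring R] (n m : ℕ) (A : Fin (2 * n) → R)
    (σ : Equiv.Perm (Fin (2 * n))) : (pList n m A σ).length = n := by
  simp [pList]

lemma Ee_zero {R : Type*} [Ring R] (n : ℕ) (A : Fin (2 * n) → R) :
    Ee n A 0 = nambu A := by
  unfold Ee nambu
  refine Finset.sum_congr rfl fun σ _ => ?_
  congr 1
  rw [pair_prod n (fun i => A (σ i))]
  unfold pList
  congr 1

lemma pList_set1 {R : Type*} [Ring R] (n m : ℕ) (hm : m < n) (A : Fin (2 * n) → R)
    (σ : Equiv.Perm (Fin (2 * n))) :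
    (pList n (m + 1) A σ).set m
        (A (σ ⟨2 * m, by omega⟩) * A (σ ⟨2 * m + 1, by omega⟩)) = pList n m A σ := by
  apply List.ext_getElem
  · simp [pList]
  · intro i h1 h2
    have hi : i < n := by simpa [pList_length] using h2
    simp only [pList, List.getElem_set, List.getElem_ofFn, List.length_ofFn] at h1 h2 ⊢
    by_cases him : m = i
    · subst him
      rw [if_pos rfl, if_neg (lt_irrefl m)]
    · rw [if_neg him]
      by_cases h3 : i < m
      · rw [if_pos (by omega), if_pos h3]
      · rw [if_neg (by omega), if_neg h3]

lemma pList_set2 {R : Type*} [Ring R] (n m : ℕ) (hm : m < n) (A : Fin (2 * n) → R)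
    (σ : Equiv.Perm (Fin (2 * n))) (a b : Fin (2 * n)) (ha : a.1 = 2 * m) (hb : b.1 = 2 * m + 1) :
    (pList n (m + 1) A σ).set m (A (σ b) * A (σ a)) = pList n m A (σ * Equiv.swap a b) := by
  have hane : a ≠ b := by
    intro h; rw [h] at ha; omega
  apply List.ext_getElem
  · simp [pList]
  · intro i h1 h2
    have hi : i < n := by simpa [pList_length] using h2
    simp only [pList, List.getElem_set, List.getElem_ofFn, List.length_ofFn] at h1 h2 ⊢
    by_cases him : m = i
    · subst him
      rw [if_pos rfl, if_neg (lt_irrefl m)]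
      have h2m : (⟨2 * m, by omega⟩ : Fin (2 * n)) = a := by
        apply Fin.ext; rw [ha]
      have h2m1 : (⟨2 * m + 1, by omega⟩ : Fin (2 * n)) = b := by
        apply Fin.ext; rw [hb]
      rw [h2m, h2m1, Equiv.Perm.mul_apply, Equiv.Perm.mul_apply,
        Equiv.swap_apply_left, Equiv.swap_apply_right]
    · have e1 : (σ * Equiv.swap a b) ⟨2 * i, by omega⟩ = σ ⟨2 * i, by omega⟩ := by
        rw [Equiv.Perm.mul_apply, Equiv.swap_apply_of_ne_of_ne]
        · intro h; rw [← h] at ha; simp at ha; omega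
        · intro h; rw [← h] at hb; simp at hb; omega
      have e2 : (σ * Equiv.swap a b) ⟨2 * i + 1, by omega⟩ = σ ⟨2 * i + 1, by omega⟩ := by
        rw [Equiv.Perm.mul_apply, Equiv.swap_apply_of_ne_of_ne]
        · intro h; rw [← h] at ha; simp at ha; omega
        · intro h; rw [← h] at hb; simp at hb; omega
      rw [if_neg him, e1, e2]
      by_cases h3 : i < m
      · rw [if_pos (by omega), if_pos h3]
      · rw [if_neg (by omega), if_neg h3]

lemma Ee_step {R : Type*} [Ring R] (n : ℕ) (A : Fin (2 * n) → R) (m : ℕ) (hm : m < n) :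
    Ee n A (m + 1) = Ee n A m + Ee n A m := by
  have hab : (⟨2 * m, by omega⟩ : Fin (2 * n)) ≠ (⟨2 * m + 1, by omega⟩ : Fin (2 * n)) := by
    intro hcon
    have := congrArg Fin.val hcon
    simp at this
  set t : Equiv.Perm (Fin (2 * n)) :=
    Equiv.swap (⟨2 * m, by omega⟩ : Fin (2 * n)) ⟨2 * m + 1, by omega⟩ with ht
  have key : ∀ σ : Equiv.Perm (Fin (2 * n)),
      (pList n (m + 1) A σ).prod = (pList n m A σ).prod - (pList n m A (σ * t)).prod := by
    intro σ
    have hlen : m < (pList n (m + 1) A σ).length := by rw [pList_length]; omega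
    have hget : (pList n (m + 1) A σ).get ⟨m, hlen⟩ =
        A (σ ⟨2 * m, by omega⟩) * A (σ ⟨2 * m + 1, by omega⟩) -
          A (σ ⟨2 * m + 1, by omega⟩) * A (σ ⟨2 * m, by omega⟩) := by
      simp [pList, List.get_ofFn]
    have h := list_prod_sub _ m hlen _ _ hget
    rw [h, pList_set1 n m hm A σ, pList_set2 n m hm A σ _ _ rfl rfl]
  have reidx : ∑ σ : Equiv.Perm (Fin (2 * n)),
        (Equiv.Perm.sign σ : ℤ) • (pList n m A (σ * t)).prod
      = -∑ σ : Equiv.Perm (Fin (2 * n)),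
          (Equiv.Perm.sign σ : ℤ) • (pList n m A σ).prod := by
    rw [← Finset.sum_neg_distrib]
    apply Fintype.sum_equiv (Equiv.mulRight t)
    intro σ
    have hsgn : (Equiv.Perm.sign (σ * t) : ℤ) = -(Equiv.Perm.sign σ : ℤ) := by
      rw [Equiv.Perm.sign_mul, ht, Equiv.Perm.sign_swap hab]
      simp
    rw [show (Equiv.mulRight t) σ = σ * t from rfl, hsgn, neg_smul, neg_neg]
  unfold Ee
  calc ∑ σ : Equiv.Perm (Fin (2 * n)), (Equiv.Perm.sign σ : ℤ) • (pList n (m + 1) A σ).prod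
      = ∑ σ : Equiv.Perm (Fin (2 * n)),
          ((Equiv.Perm.sign σ : ℤ) • (pList n m A σ).prod -
            (Equiv.Perm.sign σ : ℤ) • (pList n m A (σ * t)).prod) :=
        Finset.sum_congr rfl fun σ _ => by rw [key σ, smul_sub]
    _ = (∑ σ : Equiv.Perm (Fin (2 * n)), (Equiv.Perm.sign σ : ℤ) • (pList n m A σ).prod) -
          ∑ σ : Equiv.Perm (Fin (2 * n)), (Equiv.Perm.sign σ : ℤ) • (pList n m A (σ * t)).prod :=
        Finset.sum_sub_distrib _ _
    _ = (∑ σ : Equiv.Perm (Fin (2 * n)), (Equiv.Perm.sign σ : ℤ) • (pList n m A σ).prod) +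
          ∑ σ : Equiv.Perm (Fin (2 * n)), (Equiv.Perm.sign σ : ℤ) • (pList n m A σ).prod := by
        rw [reidx, sub_neg_eq_add]

lemma nambu_comm {R : Type*} [Ring R] (n : ℕ) (A : Fin (2 * n) → R) :
    ((2 : ℤ) ^ n) • nambu A =
      ∑ σ : Equiv.Perm (Fin (2 * n)), (Equiv.Perm.sign σ : ℤ) •
        (List.ofFn fun j : Fin n =>
          A (σ ⟨2 * j.1, pair_fst_lt j⟩) * A (σ ⟨2 * j.1 + 1, pair_snd_lt j⟩)
            - A (σ ⟨2 * j.1 + 1, pair_snd_lt j⟩) *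
                A (σ ⟨2 * j.1, pair_fst_lt j⟩)).prod := by
  have main : ∀ m, m ≤ n → Ee n A m = ((2 : ℤ) ^ m) • Ee n A 0 := by
    intro m
    induction m with
    | zero => intro _; simp
    | succ m ih =>
      intro hm
      rw [Ee_step n A m (by omega), ih (by omega), pow_succ, mul_comm, mul_smul, two_smul]
  have h1 : Ee n A n = ((2 : ℤ) ^ n) • nambu A := by
    rw [main n le_rfl, Ee_zero]
  rw [← h1]
  unfold Ee
  refine Finset.sum_congr rfl fun σ _ => ?_
  congr 1
  unfold pList
  exact congrArg (fun l => List.prod l)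
    (congrArg List.ofFn (funext fun j => if_pos j.2))
lemma smul_ofFn_prod {R : Type*} [Ring R] [Algebra ℂ R] (r : ℂ) :
    ∀ (m : ℕ) (v : Fin m → R),
      (List.ofFn fun j => r • v j).prod = r ^ m • (List.ofFn v).prod := by
  intro m
  induction m with
  | zero => intro v; simp
  | succ m ih =>
    intro v
    rw [List.ofFn_succ, List.ofFn_succ, List.prod_cons, List.prod_cons,
      ih (fun j => v j.succ), smul_mul_assoc, mul_smul_comm, smul_smul, ← pow_succ']
section Analysis

variable {H : ℕ → Type*} [∀ k, NormedRing (H k)]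

lemma one_div_bigO_one : (fun k : ℕ => (1 : ℝ) / k) =O[atTop] (fun _ : ℕ => (1 : ℝ)) := by
  apply IsBigO.of_bound 1
  filter_upwards with k
  simp only [norm_div, norm_one, Real.norm_natCast, one_mul]
  rcases Nat.eq_zero_or_pos k with h | h
  · simp [h]
  · rw [div_le_one (by positivity)]
    exact_mod_cast h

lemma bddO_of_bound {a : ∀ k, H k} {C : ℝ} (h : ∀ k, ‖a k‖ ≤ C) :
    (fun k => ‖a k‖) =O[atTop] (fun _ : ℕ => (1 : ℝ)) := by
  apply IsBigO.of_bound C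
  filter_upwards with k
  simpa using (le_trans (le_abs_self _) (by rw [abs_of_nonneg (norm_nonneg _)]; exact h k))

lemma bddO_of_close {a b : ∀ k, H k}
    (hab : (fun k => ‖a k - b k‖) =O[atTop] fun k : ℕ => (1 : ℝ) / k)
    (hb : (fun k => ‖b k‖) =O[atTop] (fun _ : ℕ => (1 : ℝ))) :
    (fun k => ‖a k‖) =O[atTop] (fun _ : ℕ => (1 : ℝ)) := by
  have h1 : (fun k => ‖a k‖) =O[atTop] (fun k => ‖a k - b k‖ + ‖b k‖) := by
    apply Asymptotics.isBigO_of_le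
    intro k
    have : ‖a k‖ ≤ ‖a k - b k‖ + ‖b k‖ := by
      calc ‖a k‖ = ‖a k - b k + b k‖ := by rw [sub_add_cancel]
        _ ≤ ‖a k - b k‖ + ‖b k‖ := norm_add_le _ _
    exact le_trans (by simpa using this) (le_abs_self _)
  exact h1.trans ((hab.trans one_div_bigO_one).add hb)

lemma bddO_mul {a b : ∀ k, H k}
    (ha : (fun k => ‖a k‖) =O[atTop] (fun _ : ℕ => (1 : ℝ)))
    (hb : (fun k => ‖b k‖) =O[atTop] (fun _ : ℕ => (1 : ℝ))) :
    (fun k => ‖a k * b k‖) =O[atTop] (fun _ : ℕ => (1 : ℝ)) := by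
  have h1 : (fun k => ‖a k * b k‖) =O[atTop] (fun k => ‖a k‖ * ‖b k‖) := by
    apply Asymptotics.isBigO_of_le
    intro k
    exact le_trans (by simpa using norm_mul_le (a k) (b k)) (le_abs_self _)
  exact h1.trans (by simpa using ha.mul hb)

lemma close_trans {a b c : ∀ k, H k}
    (hab : (fun k => ‖a k - b k‖) =O[atTop] fun k : ℕ => (1 : ℝ) / k)
    (hbc : (fun k => ‖b k - c k‖) =O[atTop] fun k : ℕ => (1 : ℝ) / k) :
    (fun k => ‖a k - c k‖) =O[atTop] fun k : ℕ => (1 : ℝ) / k := by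
  have h1 : (fun k => ‖a k - c k‖) =O[atTop] (fun k => ‖a k - b k‖ + ‖b k - c k‖) := by
    apply Asymptotics.isBigO_of_le
    intro k
    have : ‖a k - c k‖ ≤ ‖a k - b k‖ + ‖b k - c k‖ := norm_sub_le_norm_sub_add_norm_sub _ _ _
    exact le_trans (by simpa using this) (le_abs_self _)
  exact h1.trans (by simpa using hab.add hbc)

lemma close_mul {a b c d : ∀ k, H k}
    (hab : (fun k => ‖a k - b k‖) =O[atTop] fun k : ℕ => (1 : ℝ) / k)
    (hcd : (fun k => ‖c k - d k‖) =O[atTop] fun k : ℕ => (1 : ℝ) / k)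
    (hc : (fun k => ‖c k‖) =O[atTop] (fun _ : ℕ => (1 : ℝ)))
    (hb : (fun k => ‖b k‖) =O[atTop] (fun _ : ℕ => (1 : ℝ))) :
    (fun k => ‖a k * c k - b k * d k‖) =O[atTop] fun k : ℕ => (1 : ℝ) / k := by
  have h1 : (fun k => ‖a k * c k - b k * d k‖) =O[atTop]
      (fun k => ‖a k - b k‖ * ‖c k‖ + ‖b k‖ * ‖c k - d k‖) := by
    apply Asymptotics.isBigO_of_le
    intro k
    have e : a k * c k - b k * d k = (a k - b k) * c k + b k * (c k - d k) := by
      rw [sub_mul, mul_sub]; abel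
    have : ‖a k * c k - b k * d k‖ ≤ ‖a k - b k‖ * ‖c k‖ + ‖b k‖ * ‖c k - d k‖ := by
      rw [e]
      exact le_trans (norm_add_le _ _)
        (add_le_add (norm_mul_le _ _) (norm_mul_le _ _))
    exact le_trans (by simpa using this) (le_abs_self _)
  have h2 : (fun k => ‖a k - b k‖ * ‖c k‖) =O[atTop] fun k : ℕ => (1 : ℝ) / k := by
    simpa using hab.mul hc
  have h3 : (fun k => ‖b k‖ * ‖c k - d k‖) =O[atTop] fun k : ℕ => (1 : ℝ) / k := by
    simpa using hb.mul hcd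
  exact h1.trans (by simpa using h2.add h3)

lemma close_listprod :
    ∀ (m : ℕ) (c d : (k : ℕ) → Fin (m + 1) → H k),
      (∀ j, (fun k => ‖c k j - d k j‖) =O[atTop] fun k : ℕ => (1 : ℝ) / k) →
      (∀ j, (fun k => ‖d k j‖) =O[atTop] (fun _ : ℕ => (1 : ℝ))) →
      ((fun k => ‖(List.ofFn (c k)).prod - (List.ofFn (d k)).prod‖)
          =O[atTop] fun k : ℕ => (1 : ℝ) / k) ∧
        ((fun k => ‖(List.ofFn (d k)).prod‖) =O[atTop] (fun _ : ℕ => (1 : ℝ))) := by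
  intro m
  induction m with
  | zero =>
    intro c d hcd hd
    have e1 : ∀ k, (List.ofFn (c k)).prod = c k 0 := by intro k; simp
    have e2 : ∀ k, (List.ofFn (d k)).prod = d k 0 := by intro k; simp
    constructor
    · simpa only [e1, e2] using hcd 0
    · simpa only [e2] using hd 0
  | succ m ih =>
    intro c d hcd hd
    obtain ⟨ihc, ihd⟩ := ih (fun k j => c k j.succ) (fun k j => d k j.succ)
      (fun j => hcd j.succ) (fun j => hd j.succ)
    have e1 : ∀ k, (List.ofFn (c k)).prod
        = c k 0 * (List.ofFn fun j : Fin (m + 1) => c k j.succ).prod := by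
      intro k; rw [List.ofFn_succ]; simp
    have e2 : ∀ k, (List.ofFn (d k)).prod
        = d k 0 * (List.ofFn fun j : Fin (m + 1) => d k j.succ).prod := by
      intro k; rw [List.ofFn_succ]; simp
    have hbc : (fun k => ‖(List.ofFn fun j : Fin (m + 1) => c k j.succ).prod‖)
        =O[atTop] (fun _ : ℕ => (1 : ℝ)) := bddO_of_close ihc ihd
    constructor
    · have := close_mul (hcd 0) ihc hbc (hd 0)
      simpa only [← e1, ← e2] using this
    · have := bddO_mul (hd 0) ihd
      simpa only [← e2] using this

lemma close_listprod' (m : ℕ) (hm : 0 < m) (c d : (k : ℕ) → Fin m → H k)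
    (hcd : ∀ j, (fun k => ‖c k j - d k j‖) =O[atTop] fun k : ℕ => (1 : ℝ) / k)
    (hd : ∀ j, (fun k => ‖d k j‖) =O[atTop] (fun _ : ℕ => (1 : ℝ))) :
    (fun k => ‖(List.ofFn (c k)).prod - (List.ofFn (d k)).prod‖)
      =O[atTop] fun k : ℕ => (1 : ℝ) / k := by
  obtain ⟨m', rfl⟩ : ∃ m', m = m' + 1 := ⟨m - 1, by omega⟩
  exact (close_listprod m' c d hcd hd).1

end Analysis
/-- Theorem `thvolform`, abstract form: for quantization maps `T k`
satisfying the Berezin–Toeplitz axioms (i) `‖ik[T_f,T_g] − T_{{f,g}}‖ = O(1/k)`,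
(ii) `‖T_f‖ ≤ |f|_∞`, (iii) `‖T_{f₁}⋯T_{f_p} − T_{f₁⋯f_p}‖ = O(1/k)`, where `{·,·}` is an
antisymmetric biderivation, and for the order-`2n` bracket
`{f₁,...,f_{2n}} = (1/(2ⁿ n!)) ∑_σ sign(σ) ∏_j {f_{σ(2j−1)}, f_{σ(2j)}}`, one has
`‖((ik)ⁿ/n!)[T_{f₁},...,T_{f_{2n}}] − T_{{f₁,...,f_{2n}}}‖ = O(1/k)` as `k → ∞`. -/
theorem stmt12 {F : Type*} [CommRing F] [Algebra ℂ F]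
    (n : ℕ) (hn : 0 < n)
    (H : ℕ → Type*) [∀ k, NormedRing (H k)] [∀ k, NormedAlgebra ℂ (H k)]
    (T : ∀ k, F →ₗ[ℂ] H k)
    (bracket : F →ₗ[ℂ] F →ₗ[ℂ] F) (supNorm : F → ℝ)
    (hskew : ∀ f g : F, bracket f g = -bracket g f)
    (hder : ∀ f g h : F, bracket f (g * h) = bracket f g * h + g * bracket f h)
    (h₁ : ∀ f g : F,
      (fun k : ℕ => ‖(Complex.I * k) • (T k f * T k g - T k g * T k f) - T k (bracket f g)‖)
        =O[atTop] fun k : ℕ => (1 : ℝ) / k)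
    (h₂ : ∀ (f : F) (k : ℕ), ‖T k f‖ ≤ supNorm f)
    (h₃ : ∀ (p : ℕ) (f : Fin p → F),
      (fun k : ℕ => ‖(List.ofFn fun i => T k (f i)).prod - T k (∏ i, f i)‖)
        =O[atTop] fun k : ℕ => (1 : ℝ) / k)
    (f : Fin (2 * n) → F) :
    (fun k : ℕ =>
        ‖((Complex.I * k) ^ n / (Nat.factorial n : ℂ)) • nambu (fun i => T k (f i)) -
          T k (((1 : ℂ) / (2 ^ n * (Nat.factorial n : ℂ))) •
            ∑ σ : Equiv.Perm (Fin (2 * n)),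
              (Equiv.Perm.sign σ : ℤ) •
                ∏ j : Fin n,
                  bracket (f (σ ⟨2 * j.1, by have := j.2; omega⟩))
                          (f (σ ⟨2 * j.1 + 1, by have := j.2; omega⟩)))‖)
      =O[atTop] fun k : ℕ => (1 : ℝ) / k := by
  classical
  set K : ℂ := (1 : ℂ) / (2 ^ n * (Nat.factorial n : ℂ)) with hK
  set g : Equiv.Perm (Fin (2 * n)) → Fin n → F := fun σ j =>
    bracket (f (σ ⟨2 * j.1, by have := j.2; omega⟩))
      (f (σ ⟨2 * j.1 + 1, by have := j.2; omega⟩)) with hg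
  set c : Equiv.Perm (Fin (2 * n)) → (k : ℕ) → Fin n → H k := fun σ k j =>
    (Complex.I * k) • (T k (f (σ ⟨2 * j.1, by have := j.2; omega⟩)) *
        T k (f (σ ⟨2 * j.1 + 1, by have := j.2; omega⟩)) -
      T k (f (σ ⟨2 * j.1 + 1, by have := j.2; omega⟩)) *
        T k (f (σ ⟨2 * j.1, by have := j.2; omega⟩))) with hc
  -- analytic part: each σ-term is close to the Toeplitz operator of the bracket product
  have hclose : ∀ σ : Equiv.Perm (Fin (2 * n)),
      (fun k => ‖(List.ofFn (c σ k)).prod - T k (∏ j, g σ j)‖)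
        =O[atTop] fun k : ℕ => (1 : ℝ) / k := by
    intro σ
    have hcd : ∀ j : Fin n, (fun k => ‖c σ k j - T k (g σ j)‖)
        =O[atTop] fun k : ℕ => (1 : ℝ) / k := fun j => h₁ _ _
    have hd : ∀ j : Fin n, (fun k => ‖T k (g σ j)‖) =O[atTop] (fun _ : ℕ => (1 : ℝ)) :=
      fun j => bddO_of_bound (fun k => h₂ (g σ j) k)
    exact close_trans (close_listprod' n hn (c σ) (fun k j => T k (g σ j)) hcd hd)
      (h₃ n (g σ))
  -- algebraic identity, for each k
  have keyid : ∀ k : ℕ,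
      ((Complex.I * k) ^ n / (Nat.factorial n : ℂ)) • nambu (fun i => T k (f i)) -
          T k (K • ∑ σ : Equiv.Perm (Fin (2 * n)), (Equiv.Perm.sign σ : ℤ) • ∏ j, g σ j)
        = K • ∑ σ : Equiv.Perm (Fin (2 * n)), (Equiv.Perm.sign σ : ℤ) •
            ((List.ofFn (c σ k)).prod - T k (∏ j, g σ j)) := by
    intro k
    have hA := nambu_comm n (fun i => T k (f i))
    have hscale : ∀ σ : Equiv.Perm (Fin (2 * n)),
        (List.ofFn (c σ k)).prod = ((Complex.I * k) ^ n) •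
          (List.ofFn fun j : Fin n =>
            T k (f (σ ⟨2 * j.1, by have := j.2; omega⟩)) *
                T k (f (σ ⟨2 * j.1 + 1, by have := j.2; omega⟩)) -
              T k (f (σ ⟨2 * j.1 + 1, by have := j.2; omega⟩)) *
                T k (f (σ ⟨2 * j.1, by have := j.2; omega⟩))).prod := by
      intro σ
      exact smul_ofFn_prod (Complex.I * k) n _
    have e1 : ((Complex.I * k) ^ n / (Nat.factorial n : ℂ)) • nambu (fun i => T k (f i))
        = K • ∑ σ : Equiv.Perm (Fin (2 * n)), (Equiv.Perm.sign σ : ℤ) •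
            (List.ofFn (c σ k)).prod := by
      have h2 : ∑ σ : Equiv.Perm (Fin (2 * n)), (Equiv.Perm.sign σ : ℤ) •
            (List.ofFn (c σ k)).prod
          = ((2 : ℂ) ^ n * (Complex.I * k) ^ n) • nambu (fun i => T k (f i)) := by
        calc ∑ σ : Equiv.Perm (Fin (2 * n)), (Equiv.Perm.sign σ : ℤ) •
              (List.ofFn (c σ k)).prod
            = (Complex.I * k) ^ n • ∑ σ : Equiv.Perm (Fin (2 * n)),
                (Equiv.Perm.sign σ : ℤ) •
                (List.ofFn fun j : Fin n =>
                  T k (f (σ ⟨2 * j.1, by have := j.2; omega⟩)) *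
                      T k (f (σ ⟨2 * j.1 + 1, by have := j.2; omega⟩)) -
                    T k (f (σ ⟨2 * j.1 + 1, by have := j.2; omega⟩)) *
                      T k (f (σ ⟨2 * j.1, by have := j.2; omega⟩))).prod := by
              rw [Finset.smul_sum]
              exact Finset.sum_congr rfl fun σ _ => by
                rw [hscale σ, smul_comm]
          _ = (Complex.I * k) ^ n • (((2 : ℤ) ^ n) • nambu (fun i => T k (f i))) := by
              rw [← hA]
          _ = ((2 : ℂ) ^ n * (Complex.I * k) ^ n) • nambu (fun i => T k (f i)) := by
              rw [← Int.cast_smul_eq_zsmul ℂ, smul_smul]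
              push_cast
              ring_nf
      rw [h2, smul_smul, hK]
      congr 1
      have hf : (Nat.factorial n : ℂ) ≠ 0 := by
        exact_mod_cast Nat.cast_ne_zero.mpr (Nat.factorial_ne_zero n)
      field_simp
    have e2 : T k (K • ∑ σ : Equiv.Perm (Fin (2 * n)), (Equiv.Perm.sign σ : ℤ) • ∏ j, g σ j)
        = K • ∑ σ : Equiv.Perm (Fin (2 * n)), (Equiv.Perm.sign σ : ℤ) • T k (∏ j, g σ j) := by
      rw [map_smul, map_sum]
      congr 1
      exact Finset.sum_congr rfl fun σ _ => map_zsmul (T k) _ _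
    rw [e1, e2, ← smul_sub, ← Finset.sum_sub_distrib]
    congr 1
    exact Finset.sum_congr rfl fun σ _ => (smul_sub _ _ _).symm
  -- conclusion
  have hsum : (fun k => ∑ σ : Equiv.Perm (Fin (2 * n)),
      ‖(List.ofFn (c σ k)).prod - T k (∏ j, g σ j)‖) =O[atTop] fun k : ℕ => (1 : ℝ) / k := by
    simpa only [Finset.sum_fn] using Asymptotics.IsBigO.sum (s := Finset.univ) fun σ _ => hclose σ
  have hsgn : ∀ (k : ℕ) (σ : Equiv.Perm (Fin (2 * n))) (x : H k),
      ‖(Equiv.Perm.sign σ : ℤ) • x‖ = ‖x‖ := by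
    intro k σ x
    rcases Int.units_eq_one_or (Equiv.Perm.sign σ) with h | h <;> rw [h] <;> simp
  have hle : ∀ k : ℕ,
      ‖((Complex.I * k) ^ n / (Nat.factorial n : ℂ)) • nambu (fun i => T k (f i)) -
          T k (K • ∑ σ : Equiv.Perm (Fin (2 * n)), (Equiv.Perm.sign σ : ℤ) • ∏ j, g σ j)‖
        ≤ ‖K‖ * ∑ σ : Equiv.Perm (Fin (2 * n)),
            ‖(List.ofFn (c σ k)).prod - T k (∏ j, g σ j)‖ := by
    intro k
    rw [keyid k, norm_smul]
    apply mul_le_mul_of_nonneg_left _ (norm_nonneg _)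
    refine le_trans (norm_sum_le _ _) ?_
    apply le_of_eq
    exact Finset.sum_congr rfl fun σ _ => hsgn k σ _
  have hfinal : (fun k : ℕ =>
      ‖((Complex.I * k) ^ n / (Nat.factorial n : ℂ)) • nambu (fun i => T k (f i)) -
          T k (K • ∑ σ : Equiv.Perm (Fin (2 * n)), (Equiv.Perm.sign σ : ℤ) • ∏ j, g σ j)‖)
      =O[atTop] fun k : ℕ => (1 : ℝ) / k := by
    have h1 : (fun k : ℕ =>
        ‖((Complex.I * k) ^ n / (Nat.factorial n : ℂ)) • nambu (fun i => T k (f i)) -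
            T k (K • ∑ σ : Equiv.Perm (Fin (2 * n)), (Equiv.Perm.sign σ : ℤ) • ∏ j, g σ j)‖)
        =O[atTop] (fun k => ‖K‖ * ∑ σ : Equiv.Perm (Fin (2 * n)),
            ‖(List.ofFn (c σ k)).prod - T k (∏ j, g σ j)‖) := by
      apply Asymptotics.isBigO_of_le
      intro k
      exact le_trans (by simpa using hle k) (le_abs_self _)
    exact h1.trans (hsum.const_mul_left ‖K‖)
  simp only [hg] at hfinal
  exact hfinal
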